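/- Let X be a real random variable with mean μ, let d : ℝ → ℝ be convex with E[d(X)] ≤ σ̄, and suppose λ₀, λ₁, λ₂ ∈ ℝ with λ₂ ≥ 0 satisfy: V(x) := λ₀ + λ₁x + λ₂d(x) ≥ 0 for all x < t, V(x) ≥ x − λ₃ for all x ≥ t, and λ₀ + λ₁μ + λ₂σ̄ ≤ 0. Then E[X | X ≥ t] ≤ λ₃ whenever P(X ≥ t) > 0. -/

import Mathlib

open MeasureTheory

theorem stmt14 (P : Measure ℝ) [IsProbabilityMeasure P] (m sbar t l0 l1 l2 l3 : ℝ)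
    (d : ℝ → ℝ) (hconv : ConvexOn ℝ Set.univ d)
    (hX : Integrable (fun x => x) P) (hdint : Integrable (fun x => d x) P)
    (hmean : ∫ x, x ∂P = m) (hdisp : ∫ x, d x ∂P ≤ sbar)
    (hl2 : 0 ≤ l2)
    (hV1 : ∀ x < t, 0 ≤ l0 + l1 * x + l2 * d x)
    (hV2 : ∀ x, t ≤ x → x - l3 ≤ l0 + l1 * x + l2 * d x)
    (hfeas : l0 + l1 * m + l2 * sbar ≤ 0)
    (hpos : 0 < (P {x : ℝ | t ≤ x}).toReal) :
    (∫ x in {x : ℝ | t ≤ x}, x ∂P) / (P {x : ℝ | t ≤ x}).toReal ≤ l3 := by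
  set S : Set ℝ := {x : ℝ | t ≤ x} with hS
  have hSmeas : MeasurableSet S := measurableSet_Ici
  set V : ℝ → ℝ := fun x => l0 + l1 * x + l2 * d x with hVdef
  have hVint : Integrable V P := by
    exact ((integrable_const l0).add (hX.const_mul l1)).add (hdint.const_mul l2)
  have hVtot : ∫ x, V x ∂P ≤ 0 := by
    have h1 : ∫ x, V x ∂P = l0 + l1 * m + l2 * ∫ x, d x ∂P := by
      have e1 : ∫ x, V x ∂P = (∫ x, (l0 + l1 * x) ∂P) + ∫ x, l2 * d x ∂P :=
        integral_add ((integrable_const l0).add (hX.const_mul l1)) (hdint.const_mul l2)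
      have e2 : ∫ x, (l0 + l1 * x) ∂P = l0 + l1 * m := by
        rw [integral_add (integrable_const l0) (hX.const_mul l1), integral_const,
          integral_const_mul, hmean]
        simp
      rw [e1, e2, integral_const_mul]
    rw [h1]
    calc l0 + l1 * m + l2 * ∫ x, d x ∂P ≤ l0 + l1 * m + l2 * sbar := by
          gcongr
      _ ≤ 0 := hfeas
  have hcompl : 0 ≤ ∫ x in Sᶜ, V x ∂P := by
    apply setIntegral_nonneg hSmeas.compl
    intro x hx
    exact hV1 x (lt_of_not_ge hx)
  have hsplit : ∫ x in S, V x ∂P + ∫ x in Sᶜ, V x ∂P = ∫ x, V x ∂P :=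
    integral_add_compl hSmeas hVint
  have hSV : ∫ x in S, V x ∂P ≤ 0 := by linarith
  have hmono : ∫ x in S, (x - l3) ∂P ≤ ∫ x in S, V x ∂P := by
    apply setIntegral_mono_on (hX.sub (integrable_const l3)).integrableOn
      hVint.integrableOn hSmeas
    intro x hx
    exact hV2 x hx
  have hsub : ∫ x in S, (x - l3) ∂P
      = (∫ x in S, x ∂P) - l3 * (P S).toReal := by
    rw [integral_sub hX.integrableOn (integrableOn_const (measure_lt_top P S).ne)]
    simp [mul_comm, measureReal_def]
  rw [div_le_iff₀ hpos]
  have := hmono.trans hSV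
  rw [hsub] at this
  linarith
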